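/- Let σ₁, σ₂ be real numbers. The series ζ₂^□(σ₁, σ₂) = ∑_{k=2}^∞ (∑_{mn=k, m<n} m^{-σ₁} n^{-σ₂})² converges if and only if σ₂ > 1/2 and σ₁ + σ₂ > 1. -/

import Mathlib

open Complex Filter Asymptotics

/-- The inner sum `∑_{mn = k, m < n} m^{-σ₁} n^{-σ₂}` over factorizations of `k`. -/
noncomputable def boxTerm (σ₁ σ₂ : ℝ) (k : ℕ) : ℝ :=
  ∑ p ∈ (Nat.divisorsAntidiagonal k).filter (fun p => p.1 < p.2),
    (p.1 : ℝ) ^ (-σ₁) * (p.2 : ℝ) ^ (-σ₂)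

section Helpers
open Finset

/-- Forward fiber lemma: if `F` is nonneg and summable on `ι` and `t k` are finsets
contained in the fibers of `π`, then the fiberwise sums are summable. -/
lemma summable_fiber_sum {ι : Type*} [DecidableEq ι] {F : ι → ℝ} {t : ℕ → Finset ι} {π : ι → ℕ}
    (h0 : ∀ p, 0 ≤ F p) (hfib : ∀ k p, p ∈ t k → π p = k) (hF : Summable F) :
    Summable fun k => ∑ p ∈ t k, F p := by
  apply summable_of_sum_range_le (c := ∑' p, F p)
    (fun k => Finset.sum_nonneg fun p _ => h0 p)
  intro N
  have hdisj : ∀ k₁ ∈ Finset.range N, ∀ k₂ ∈ Finset.range N, k₁ ≠ k₂ →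
      Disjoint (t k₁) (t k₂) := by
    intro k₁ _ k₂ _ hne
    refine Finset.disjoint_left.2 fun p hp1 hp2 => hne ?_
    rw [← hfib k₁ p hp1, hfib k₂ p hp2]
  rw [← Finset.sum_biUnion hdisj]
  exact Summable.sum_le_tsum _ (fun p _ => h0 p) hF

/-- Converse fiber lemma. -/
lemma summable_of_fiber_sum {ι : Type*} [DecidableEq ι] {F : ι → ℝ} {t : ℕ → Finset ι}
    {π : ι → ℕ} (h0 : ∀ p, 0 ≤ F p) (hfib : ∀ k p, p ∈ t k → π p = k)
    (h : Summable fun k => ∑ p ∈ t k, F p) :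
    Summable fun p : ι => if p ∈ t (π p) then F p else 0 := by
  have hnn : ∀ k, 0 ≤ ∑ p ∈ t k, F p := fun k => Finset.sum_nonneg fun p _ => h0 p
  apply summable_of_sum_le (c := ∑' k, ∑ p ∈ t k, F p)
  · intro p
    dsimp only
    split
    · exact h0 p
    · exact le_rfl
  · intro u
    classical
    have hsub : u.filter (fun p => p ∈ t (π p)) ⊆ (u.image π).biUnion t := by
      intro p hp
      rw [Finset.mem_filter] at hp
      exact Finset.mem_biUnion.2 ⟨π p, Finset.mem_image_of_mem π hp.1, hp.2⟩
    calc ∑ p ∈ u, (if p ∈ t (π p) then F p else 0)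
        = ∑ p ∈ u.filter (fun p => p ∈ t (π p)), F p := by
          rw [Finset.sum_filter]
      _ ≤ ∑ p ∈ (u.image π).biUnion t, F p :=
          Finset.sum_le_sum_of_subset_of_nonneg hsub (fun p _ _ => h0 p)
      _ = ∑ k ∈ u.image π, ∑ p ∈ t k, F p := by
          refine Finset.sum_biUnion ?_
          intro k₁ _ k₂ _ hne
          refine Finset.disjoint_left.2 fun p hp1 hp2 => hne ?_
          rw [← hfib k₁ p hp1, hfib k₂ p hp2]
      _ ≤ ∑' k, ∑ p ∈ t k, F p := Summable.sum_le_tsum _ (fun k _ => hnn k) h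


lemma boxTerm_nonneg (σ₁ σ₂ : ℝ) (k : ℕ) : 0 ≤ boxTerm σ₁ σ₂ k :=
  Finset.sum_nonneg fun p _ => by positivity

lemma nec_a (σ₁ σ₂ : ℝ) (h : Summable fun k : ℕ => (boxTerm σ₁ σ₂ k) ^ 2) :
    1/2 < σ₂ := by
  have hb : ∀ k : ℕ, 2 ≤ k → ((k:ℝ) ^ (-σ₂)) ≤ boxTerm σ₁ σ₂ k := by
    intro k hk
    have hmem : ((1, k) : ℕ × ℕ) ∈
        (Nat.divisorsAntidiagonal k).filter (fun p => p.1 < p.2) := by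
      simp only [Finset.mem_filter, Nat.mem_divisorsAntidiagonal]
      refine ⟨⟨by ring, by omega⟩, by omega⟩
    have := Finset.single_le_sum
      (f := fun p : ℕ × ℕ => (p.1 : ℝ) ^ (-σ₁) * (p.2 : ℝ) ^ (-σ₂))
      (fun p _ => by positivity) hmem
    simpa [Real.one_rpow, boxTerm] using this
  have h2 : Summable fun n : ℕ => (((n + 2 : ℕ) : ℝ)) ^ (-(2*σ₂)) := by
    have hc : Summable fun n : ℕ => (boxTerm σ₁ σ₂ (n + 2)) ^ 2 :=
      h.comp_injective (fun a b hab => by omega)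
    refine Summable.of_nonneg_of_le (fun n => by positivity) (fun n => ?_) hc
    have hkpos : (0:ℝ) < ((n + 2 : ℕ) : ℝ) := by positivity
    have : (((n + 2 : ℕ) : ℝ)) ^ (-(2*σ₂)) = ((((n + 2 : ℕ) : ℝ)) ^ (-σ₂)) ^ 2 := by
      rw [← Real.rpow_natCast (_ ^ (-σ₂)) 2, ← Real.rpow_mul hkpos.le]
      norm_num
      ring_nf
    rw [this]
    exact pow_le_pow_left₀ (Real.rpow_nonneg hkpos.le _) (hb (n+2) (by omega)) 2
  have h3 := (summable_nat_add_iff (f := fun n : ℕ => (n:ℝ) ^ (-(2*σ₂))) 2).mp h2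
  rw [Real.summable_nat_rpow] at h3
  linarith

lemma nec_b (σ₁ σ₂ : ℝ) (hσ₂ : 1/2 < σ₂)
    (h : Summable fun k : ℕ => (boxTerm σ₁ σ₂ k) ^ 2) : 1 < σ₁ + σ₂ := by
  classical
  set F : ℕ × ℕ → ℝ := fun p => ((p.1 : ℝ) ^ (-σ₁) * (p.2 : ℝ) ^ (-σ₂)) ^ 2 with hF
  set t : ℕ → Finset (ℕ × ℕ) :=
    fun k => (Nat.divisorsAntidiagonal k).filter (fun p => p.1 < p.2) with ht
  have hF0 : ∀ p, 0 ≤ F p := fun p => by positivity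
  have h1 : Summable fun k => ∑ p ∈ t k, F p := by
    refine Summable.of_nonneg_of_le (fun k => Finset.sum_nonneg fun p _ => hF0 p)
      (fun k => ?_) h
    exact Finset.sum_sq_le_sq_sum_of_nonneg (fun p _ => by positivity)
  have h2 : Summable fun p : ℕ × ℕ => if p ∈ t (p.1 * p.2) then F p else 0 :=
    summable_of_fiber_sum hF0
      (fun k p hp => ((Nat.mem_divisorsAntidiagonal).1 (Finset.mem_filter.1 hp).1).1) h1
  set G : ℕ × ℕ → ℝ := fun p => if p ∈ t (p.1 * p.2) then F p else 0 with hG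
  have hG0 : ∀ p, 0 ≤ G p := by
    intro p; rw [hG]; dsimp only; split
    · exact hF0 p
    · exact le_rfl
  set s : ℕ → Finset (ℕ × ℕ) :=
    fun m => {m+1} ×ˢ Finset.Ioc (m+1) (2*(m+1)) with hs
  have h3 : Summable fun m => ∑ p ∈ s m, G p := by
    refine summable_fiber_sum (π := fun p => p.1 - 1) hG0 (fun m p hp => ?_) h2
    rw [hs] at hp
    simp only [Finset.mem_product, Finset.mem_singleton, Finset.mem_Ioc] at hp
    show p.1 - 1 = m
    omega
  have key : ∀ m : ℕ,
      2 ^ (-(2*σ₂)) * ((m+1 : ℕ) : ℝ) ^ (1 - 2*σ₁ - 2*σ₂) ≤ ∑ p ∈ s m, G p := by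
    intro m
    have hm1 : (0:ℝ) < ((m+1 : ℕ) : ℝ) := by positivity
    have hlow : ∀ p ∈ s m,
        ((m+1 : ℕ) : ℝ) ^ (-(2*σ₁)) * ((2*(m+1) : ℕ) : ℝ) ^ (-(2*σ₂)) ≤ G p := by
      intro p hp
      obtain ⟨p1, p2⟩ := p
      rw [hs] at hp
      simp only [Finset.mem_product, Finset.mem_singleton, Finset.mem_Ioc] at hp
      obtain ⟨hp1, hn1, hn2⟩ := hp
      subst hp1
      have hmem : ((m+1, p2) : ℕ × ℕ) ∈ t ((m+1) * p2) :=
        Finset.mem_filter.2 ⟨Nat.mem_divisorsAntidiagonal.2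
          ⟨rfl, Nat.mul_ne_zero (by omega) (by omega)⟩, by simpa using hn1⟩
      have hGeq : G (m+1, p2) = (((m+1:ℕ):ℝ) ^ (-σ₁) * ((p2:ℕ) : ℝ) ^ (-σ₂)) ^ 2 := by
        simp only [hG]
        rw [if_pos hmem]
      rw [hGeq]
      have hppos : (0:ℝ) < ((p2:ℕ) : ℝ) := by
        have : 0 < p2 := by omega
        exact_mod_cast this
      have e1 : (((m+1:ℕ):ℝ) ^ (-σ₁) * ((p2:ℕ) : ℝ) ^ (-σ₂)) ^ 2
          = ((m+1:ℕ):ℝ) ^ (-(2*σ₁)) * ((p2:ℕ) : ℝ) ^ (-(2*σ₂)) := by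
        rw [mul_pow, ← Real.rpow_natCast (_ ^ (-σ₁)) 2,
          ← Real.rpow_natCast (((p2:ℕ):ℝ) ^ (-σ₂)) 2,
          ← Real.rpow_mul hm1.le, ← Real.rpow_mul hppos.le]
        norm_num; ring_nf
      rw [e1]
      have hle : ((2*(m+1) : ℕ) : ℝ) ^ (-(2*σ₂)) ≤ ((p2:ℕ) : ℝ) ^ (-(2*σ₂)) := by
        rw [Real.rpow_neg (by positivity), Real.rpow_neg hppos.le]
        apply inv_anti₀ (Real.rpow_pos_of_pos hppos _)
        apply Real.rpow_le_rpow hppos.le (by exact_mod_cast hn2) (by linarith)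
      exact mul_le_mul_of_nonneg_left hle (Real.rpow_nonneg hm1.le _)
    have hcard : (s m).card = m + 1 := by
      rw [hs, Finset.card_product, Finset.card_singleton, Nat.card_Ioc]
      omega
    have := Finset.card_nsmul_le_sum (s m)
      (fun p => G p) (((m+1 : ℕ) : ℝ) ^ (-(2*σ₁)) * ((2*(m+1) : ℕ) : ℝ) ^ (-(2*σ₂))) hlow
    rw [hcard, nsmul_eq_mul] at this
    refine le_trans (le_of_eq ?_) this
    push_cast
    rw [show ((2:ℝ) * ((m:ℝ)+1)) ^ (-(2*σ₂))
        = (2:ℝ) ^ (-(2*σ₂)) * ((m:ℝ)+1) ^ (-(2*σ₂)) from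
      Real.mul_rpow (by norm_num) (by positivity)]
    rw [show (1 : ℝ) - 2*σ₁ - 2*σ₂ = 1 + (-(2*σ₁) + -(2*σ₂)) by ring,
      Real.rpow_add (by positivity), Real.rpow_add (by positivity), Real.rpow_one]
    ring
  have h4 : Summable fun m : ℕ =>
      2 ^ (-(2*σ₂)) * ((m+1 : ℕ) : ℝ) ^ (1 - 2*σ₁ - 2*σ₂) :=
    Summable.of_nonneg_of_le (fun m => by positivity) key h3
  have h5 : Summable fun m : ℕ => ((m+1 : ℕ) : ℝ) ^ (1 - 2*σ₁ - 2*σ₂) := by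
    have h2ne : (2:ℝ) ^ (-(2*σ₂)) ≠ 0 := by positivity
    exact (summable_mul_left_iff h2ne).mp h4
  have h6 := (summable_nat_add_iff (f := fun n : ℕ => (n:ℝ) ^ (1 - 2*σ₁ - 2*σ₂)) 1).mp h5
  rw [Real.summable_nat_rpow] at h6
  linarith



/-- Termwise bound for the inner sum. -/
lemma term_le (σ₁ σ₂ : ℝ) {m n : ℕ} (hm : 1 ≤ m) (hmn : m < n) :
    (m:ℝ) ^ (-σ₁) * (n:ℝ) ^ (-σ₂) ≤ ((m*n : ℕ) : ℝ) ^ (-(min σ₂ ((σ₁+σ₂)/2))) := by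
  have hm0 : (0:ℝ) < (m:ℝ) := by exact_mod_cast hm
  have hn0 : (0:ℝ) < (n:ℝ) := by
    have : 0 < n := by omega
    exact_mod_cast this
  have hmn' : (m:ℝ) ≤ (n:ℝ) := by exact_mod_cast hmn.le
  have hm1 : (1:ℝ) ≤ (m:ℝ) := by exact_mod_cast hm
  have hsplit : ∀ a : ℝ, ((m*n : ℕ) : ℝ) ^ a = (m:ℝ) ^ a * (n:ℝ) ^ a := by
    intro a
    push_cast
    exact Real.mul_rpow hm0.le hn0.le
  rcases le_total σ₂ σ₁ with hc | hc
  · have hs : min σ₂ ((σ₁+σ₂)/2) = σ₂ := min_eq_left (by linarith)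
    rw [hs, hsplit]
    refine mul_le_mul_of_nonneg_right ?_ (Real.rpow_nonneg hn0.le _)
    exact Real.rpow_le_rpow_of_exponent_le hm1 (by linarith)
  · have hs : min σ₂ ((σ₁+σ₂)/2) = (σ₁+σ₂)/2 := min_eq_right (by linarith)
    rw [hs, hsplit]
    have e1 : (m:ℝ) ^ (-σ₁) = (m:ℝ) ^ (-((σ₁+σ₂)/2)) * (m:ℝ) ^ ((σ₂-σ₁)/2) := by
      rw [← Real.rpow_add hm0]; congr 1; ring
    have e2 : (n:ℝ) ^ (-σ₂) = (n:ℝ) ^ (-((σ₁+σ₂)/2)) * (n:ℝ) ^ (-((σ₂-σ₁)/2)) := by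
      rw [← Real.rpow_add hn0]; congr 1; ring
    rw [e1, e2]
    have h3 : (m:ℝ) ^ ((σ₂-σ₁)/2) * (n:ℝ) ^ (-((σ₂-σ₁)/2)) ≤ 1 := by
      rw [Real.rpow_neg hn0.le, ← div_eq_mul_inv,
        div_le_one (Real.rpow_pos_of_pos hn0 _)]
      exact Real.rpow_le_rpow hm0.le hmn' (by linarith)
    calc (m:ℝ) ^ (-((σ₁+σ₂)/2)) * (m:ℝ) ^ ((σ₂-σ₁)/2) *
          ((n:ℝ) ^ (-((σ₁+σ₂)/2)) * (n:ℝ) ^ (-((σ₂-σ₁)/2)))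
        = ((m:ℝ) ^ (-((σ₁+σ₂)/2)) * (n:ℝ) ^ (-((σ₁+σ₂)/2))) *
          ((m:ℝ) ^ ((σ₂-σ₁)/2) * (n:ℝ) ^ (-((σ₂-σ₁)/2))) := by ring
      _ ≤ (m:ℝ) ^ (-((σ₁+σ₂)/2)) * (n:ℝ) ^ (-((σ₁+σ₂)/2)) :=
          mul_le_of_le_one_right (by positivity) h3

/-- `d(k)² ≤ ∑_{uv=k} d(u) d(v)`, via an explicit injection. -/
lemma card_sq_le (k : ℕ) :
    (Nat.divisorsAntidiagonal k).card ^ 2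
      ≤ ∑ q ∈ Nat.divisorsAntidiagonal k,
          (Nat.divisorsAntidiagonal q.1).card * (Nat.divisorsAntidiagonal q.2).card := by
  classical
  rcases eq_or_ne k 0 with rfl | hk
  · simp
  have lhs_eq : (Nat.divisorsAntidiagonal k).card ^ 2
      = ((Nat.divisorsAntidiagonal k) ×ˢ (Nat.divisorsAntidiagonal k)).card := by
    rw [Finset.card_product]; ring
  have rhs_eq : ∑ q ∈ Nat.divisorsAntidiagonal k,
        (Nat.divisorsAntidiagonal q.1).card * (Nat.divisorsAntidiagonal q.2).card
      = ((Nat.divisorsAntidiagonal k).sigma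
          (fun q => (Nat.divisorsAntidiagonal q.1) ×ˢ (Nat.divisorsAntidiagonal q.2))).card := by
    rw [Finset.card_sigma]
    exact Finset.sum_congr rfl fun q _ => (Finset.card_product _ _).symm
  rw [lhs_eq, rhs_eq]
  apply Finset.card_le_card_of_injOn
    (fun x => ⟨x.1, ((Nat.gcd x.1.1 x.2.1, x.1.1 / Nat.gcd x.1.1 x.2.1),
      (x.2.1 / Nat.gcd x.1.1 x.2.1, x.1.2 / (x.2.1 / Nat.gcd x.1.1 x.2.1)))⟩)
  · rintro ⟨⟨m, m'⟩, ⟨n, n'⟩⟩ hx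
    rw [Finset.mem_coe, Finset.mem_product] at hx
    obtain ⟨hx1, hx2⟩ := hx
    obtain ⟨hm, -⟩ := Nat.mem_divisorsAntidiagonal.1 hx1
    obtain ⟨hn, -⟩ := Nat.mem_divisorsAntidiagonal.1 hx2
    have hm0 : m ≠ 0 := by rintro rfl; simp at hm; exact hk hm.symm
    have hn0 : n ≠ 0 := by rintro rfl; simp at hn; exact hk hn.symm
    have hm'0 : m' ≠ 0 := by rintro rfl; simp at hm; exact hk hm.symm
    set g := Nat.gcd m n with hg
    have hg0 : g ≠ 0 := Nat.gcd_ne_zero_left hm0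
    have dvd1 : g ∣ m := Nat.gcd_dvd_left m n
    have dvd2 : g ∣ n := Nat.gcd_dvd_right m n
    have hdvd : (n / g) ∣ m' := by
      have hlk : m * (n / g) ∣ k := by
        rw [← Nat.mul_div_assoc m dvd2, ← Nat.lcm]
        exact Nat.lcm_dvd ⟨m', hm.symm⟩ ⟨n', hn.symm⟩
      rw [← hm] at hlk
      exact (Nat.mul_dvd_mul_iff_left (Nat.pos_of_ne_zero hm0)).1 hlk
    refine Finset.mem_sigma.2 ⟨hx1, Finset.mem_product.2 ⟨?_, ?_⟩⟩
    · exact Nat.mem_divisorsAntidiagonal.2 ⟨Nat.mul_div_cancel' dvd1, hm0⟩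
    · exact Nat.mem_divisorsAntidiagonal.2 ⟨Nat.mul_div_cancel' hdvd, hm'0⟩
  · rintro ⟨⟨m, m'⟩, ⟨n, n'⟩⟩ hx ⟨⟨a, a'⟩, ⟨b, b'⟩⟩ hy heq
    simp only [Finset.mem_coe, Finset.mem_product] at hx hy
    obtain ⟨hx1, hx2⟩ := hx
    obtain ⟨hy1, hy2⟩ := hy
    obtain ⟨hm, -⟩ := Nat.mem_divisorsAntidiagonal.1 hx1
    obtain ⟨hn, -⟩ := Nat.mem_divisorsAntidiagonal.1 hx2
    obtain ⟨ha, -⟩ := Nat.mem_divisorsAntidiagonal.1 hy1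
    obtain ⟨hb, -⟩ := Nat.mem_divisorsAntidiagonal.1 hy2
    have hn0 : n ≠ 0 := by rintro rfl; simp at hn; exact hk hn.symm
    have hfst : ((m, m') : ℕ × ℕ) = (a, a') := congrArg Sigma.fst heq
    have hsnd := eq_of_heq (Sigma.mk.inj_iff.1 heq).2
    dsimp only at hsnd
    obtain ⟨h1, h2⟩ := Prod.mk_inj.1 hfst
    subst h1; subst h2
    obtain ⟨hpair1, hpair2⟩ := Prod.mk_inj.1 hsnd
    obtain ⟨hgcd, -⟩ := Prod.mk_inj.1 hpair1
    obtain ⟨hnd, -⟩ := Prod.mk_inj.1 hpair2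
    have hbn : n = b := by
      have e1 : n = Nat.gcd m n * (n / Nat.gcd m n) :=
        (Nat.mul_div_cancel' (Nat.gcd_dvd_right m n)).symm
      have e2 : b = Nat.gcd m b * (b / Nat.gcd m b) :=
        (Nat.mul_div_cancel' (Nat.gcd_dvd_right m b)).symm
      rw [e1, e2, hnd, hgcd]
    subst hbn
    have : n' = b' := Nat.eq_of_mul_eq_mul_left (Nat.pos_of_ne_zero hn0)
      (by rw [hn, hb])
    simp [this]

lemma boxTerm_nonneg' (σ₁ σ₂ : ℝ) (k : ℕ) : 0 ≤ boxTerm σ₁ σ₂ k :=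
  Finset.sum_nonneg fun p _ => by positivity

set_option maxHeartbeats 2000000 in
lemma suf (σ₁ σ₂ : ℝ) (hσ₂ : 1/2 < σ₂) (h12 : 1 < σ₁ + σ₂) :
    Summable fun k : ℕ => (boxTerm σ₁ σ₂ k) ^ 2 := by
  classical
  set s : ℝ := min σ₂ ((σ₁+σ₂)/2) with hsdef
  have hs2 : 1/2 < s := lt_min hσ₂ (by linarith)
  set e : ℝ := 2*s with hedef
  have he : 1 < e := by rw [hedef]; linarith
  have hbase : Summable (fun n : ℕ => (n:ℝ) ^ (-e)) :=
    Real.summable_nat_rpow.2 (by linarith)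
  have hψ : Summable (fun q : ℕ × ℕ => (q.1:ℝ) ^ (-e) * (q.2:ℝ) ^ (-e)) :=
    hbase.mul_of_nonneg hbase (fun n => Real.rpow_nonneg (Nat.cast_nonneg n) _)
      (fun n => Real.rpow_nonneg (Nat.cast_nonneg n) _)
  have hφeq : ∀ u : ℕ, (∑ q ∈ Nat.divisorsAntidiagonal u,
        ((q.1:ℝ) ^ (-e) * (q.2:ℝ) ^ (-e)))
      = ((Nat.divisorsAntidiagonal u).card : ℝ) * (u:ℝ) ^ (-e) := by
    intro u
    rw [Finset.sum_congr rfl (fun q hq => ?_), Finset.sum_const, nsmul_eq_mul]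
    obtain ⟨hq1, hq2⟩ := Nat.mem_divisorsAntidiagonal.1 hq
    rw [← Real.mul_rpow (Nat.cast_nonneg _) (Nat.cast_nonneg _), ← Nat.cast_mul, hq1]
  have hφ : Summable (fun u : ℕ =>
      ((Nat.divisorsAntidiagonal u).card : ℝ) * (u:ℝ) ^ (-e)) :=
    (summable_fiber_sum (π := fun q : ℕ × ℕ => q.1 * q.2) (fun q => by positivity)
      (fun k q hq => (Nat.mem_divisorsAntidiagonal.1 hq).1) hψ).congr hφeq
  have hB : Summable (fun k : ℕ => ∑ q ∈ Nat.divisorsAntidiagonal k,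
      (((Nat.divisorsAntidiagonal q.1).card : ℝ) * (q.1:ℝ) ^ (-e)) *
      (((Nat.divisorsAntidiagonal q.2).card : ℝ) * (q.2:ℝ) ^ (-e))) :=
    summable_fiber_sum (π := fun q : ℕ × ℕ => q.1 * q.2) (fun q => by positivity)
      (fun k q hq => (Nat.mem_divisorsAntidiagonal.1 hq).1)
      (hφ.mul_of_nonneg hφ (fun u => by positivity) (fun u => by positivity))
  refine Summable.of_nonneg_of_le (fun k => by positivity) (fun k => ?_) hB
  rcases Nat.eq_zero_or_pos k with rfl | hk
  · simp [boxTerm]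
  have hk0 : (0:ℝ) < (k:ℝ) := by exact_mod_cast hk
  set D : ℕ → ℕ := fun u => (Nat.divisorsAntidiagonal u).card with hD
  have step1 : boxTerm σ₁ σ₂ k ≤ (D k : ℝ) * (k:ℝ) ^ (-s) := by
    have t1 : boxTerm σ₁ σ₂ k ≤
        ∑ p ∈ (Nat.divisorsAntidiagonal k).filter (fun p => p.1 < p.2),
          (k:ℝ) ^ (-s) := by
      apply Finset.sum_le_sum
      intro p hp
      rw [Finset.mem_filter] at hp
      obtain ⟨hpa, hplt⟩ := hp
      obtain ⟨hpk, -⟩ := Nat.mem_divisorsAntidiagonal.1 hpa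
      have hp1 : 1 ≤ p.1 := by
        rcases Nat.eq_zero_or_pos p.1 with h0 | h1
        · exfalso; rw [h0] at hpk; simp at hpk; omega
        · exact h1
      have := term_le σ₁ σ₂ hp1 hplt
      rwa [hpk] at this
    refine t1.trans ?_
    have t2 : ∑ p ∈ (Nat.divisorsAntidiagonal k).filter (fun p => p.1 < p.2),
          (k:ℝ) ^ (-s)
        ≤ ∑ p ∈ Nat.divisorsAntidiagonal k, (k:ℝ) ^ (-s) :=
      Finset.sum_le_sum_of_subset_of_nonneg (Finset.filter_subset _ _)
        (fun p _ _ => Real.rpow_nonneg hk0.le _)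
    refine t2.trans (le_of_eq ?_)
    rw [Finset.sum_const, nsmul_eq_mul]
  have step2 : (boxTerm σ₁ σ₂ k) ^ 2 ≤ ((D k : ℝ)) ^ 2 * (k:ℝ) ^ (-e) := by
    have := pow_le_pow_left₀ (boxTerm_nonneg' σ₁ σ₂ k) step1 2
    refine this.trans (le_of_eq ?_)
    rw [mul_pow]
    congr 1
    rw [← Real.rpow_natCast ((k:ℝ) ^ (-s)) 2, ← Real.rpow_mul hk0.le]
    congr 1
    push_cast
    rw [hedef]
    ring
  refine step2.trans ?_
  have step3 : ((D k : ℝ)) ^ 2 ≤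
      ∑ q ∈ Nat.divisorsAntidiagonal k, (D q.1 : ℝ) * (D q.2 : ℝ) := by
    have := card_sq_le k
    calc ((D k : ℝ)) ^ 2 = ((D k ^ 2 : ℕ) : ℝ) := by push_cast; ring
      _ ≤ _ := by
          rw [hD]
          push_cast
          exact_mod_cast this
  calc ((D k : ℝ)) ^ 2 * (k:ℝ) ^ (-e)
      ≤ (∑ q ∈ Nat.divisorsAntidiagonal k, (D q.1 : ℝ) * (D q.2 : ℝ)) * (k:ℝ) ^ (-e) :=
        mul_le_mul_of_nonneg_right step3 (Real.rpow_nonneg hk0.le _)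
    _ = ∑ q ∈ Nat.divisorsAntidiagonal k,
          ((D q.1 : ℝ) * (q.1:ℝ) ^ (-e)) * ((D q.2 : ℝ) * (q.2:ℝ) ^ (-e)) := by
        rw [Finset.sum_mul]
        refine Finset.sum_congr rfl fun q hq => ?_
        obtain ⟨hq1, -⟩ := Nat.mem_divisorsAntidiagonal.1 hq
        rw [← hq1]
        push_cast
        rw [Real.mul_rpow (Nat.cast_nonneg _) (Nat.cast_nonneg _)]
        ring

end Helpers

theorem stmt3 (σ₁ σ₂ : ℝ) :
    Summable (fun k : ℕ => (boxTerm σ₁ σ₂ k) ^ 2) ↔ (1/2 < σ₂ ∧ 1 < σ₁ + σ₂) := by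
  constructor
  · intro h
    exact ⟨nec_a σ₁ σ₂ h, nec_b σ₁ σ₂ (nec_a σ₁ σ₂ h) h⟩
  · rintro ⟨h1, h2⟩
    exact suf σ₁ σ₂ h1 h2
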